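/- Let W ∈ ℝ^{n_z×n_x} and let l, u, l', u' ∈ ℝ^{n_z} satisfy, componentwise, l ≤ l' ≤ 0 ≤ u' ≤ u, l' < u', and l < u. Then every pair (x,z) with l' ≤ Wx ≤ u' that belongs to the relaxed network constraint set N(W,l',u') also belongs to N(W,l,u); in particular, for every coordinate i and every x with l'_i ≤ w_iᵀx ≤ u'_i, one has u'_i(w_iᵀx − l'_i)/(u'_i − l'_i) ≤ u_i(w_iᵀx − l_i)/(u_i − l_i). -/
import Mathlib


open Finset Matrix

noncomputable section

lemma chord_mono_aux (l u l' u' y : ℝ) (h1 : l ≤ l') (h2 : l' ≤ 0) (h3 : 0 ≤ u')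
    (h4 : u' ≤ u) (h5 : l' < u') (h6 : l < u) (hy1 : l' ≤ y) (hy2 : y ≤ u') :
    u' * (y - l') / (u' - l') ≤ u * (y - l) / (u - l) := by
  rw [div_le_div_iff₀ (by linarith) (by linarith)]
  nlinarith [mul_nonneg (mul_nonneg (sub_nonneg.2 hy1) (sub_nonneg.2 h4)) (neg_nonneg.2 (h1.trans h2)),
    mul_nonneg (mul_nonneg (sub_nonneg.2 hy2) (sub_nonneg.2 h1)) (sub_nonneg.2 h5.le),
    mul_nonneg (sub_nonneg.2 hy1) (sub_nonneg.2 hy2),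
    mul_nonneg (mul_nonneg (sub_nonneg.2 hy2) (sub_nonneg.2 h5.le)) (mul_nonneg (h3.trans h4) h3),
    mul_nonneg (mul_nonneg (sub_nonneg.2 hy1) (sub_nonneg.2 h5.le)) (mul_nonneg (h3.trans h4) h3)]

/-- Membership of `(x, z)` in the relaxed ReLU network constraint set `N(W, l, u)`:
`z ≥ 0`, `z ≥ Wx`, and `z i ≤ u i (wᵢᵀx − l i)/(u i − l i)` for every coordinate `i`. -/
def InRelax {nx nz : ℕ} (W : Matrix (Fin nz) (Fin nx) ℝ) (l u : Fin nz → ℝ)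
    (x : Fin nx → ℝ) (z : Fin nz → ℝ) : Prop :=
  ∀ i, 0 ≤ z i ∧ W.mulVec x i ≤ z i ∧
    z i ≤ u i * (W.mulVec x i - l i) / (u i - l i)

/-- If `l ≤ l' ≤ 0 ≤ u' ≤ u`, `l' < u'`, and `l < u` componentwise, then
every pair `(x, z)` with `l' ≤ Wx ≤ u'` belonging to `N(W, l', u')` also belongs to
`N(W, l, u)`; in particular the upper envelope is monotone in the bounds. -/
theorem relaxed_constraint_monotone {nx nz : ℕ}
    (W : Matrix (Fin nz) (Fin nx) ℝ) (l u l' u' : Fin nz → ℝ)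
    (hbounds : ∀ i, l i ≤ l' i ∧ l' i ≤ 0 ∧ 0 ≤ u' i ∧ u' i ≤ u i ∧
      l' i < u' i ∧ l i < u i) :
    (∀ (x : Fin nx → ℝ) (z : Fin nz → ℝ),
      (∀ i, l' i ≤ W.mulVec x i ∧ W.mulVec x i ≤ u' i) →
      InRelax W l' u' x z → InRelax W l u x z) ∧
    (∀ (i : Fin nz) (x : Fin nx → ℝ),
      l' i ≤ W.mulVec x i → W.mulVec x i ≤ u' i →
      u' i * (W.mulVec x i - l' i) / (u' i - l' i) ≤
        u i * (W.mulVec x i - l i) / (u i - l i)) := by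
  have key : ∀ (i : Fin nz) (x : Fin nx → ℝ),
      l' i ≤ W.mulVec x i → W.mulVec x i ≤ u' i →
      u' i * (W.mulVec x i - l' i) / (u' i - l' i) ≤
        u i * (W.mulVec x i - l i) / (u i - l i) := by
    intro i x h1 h2
    obtain ⟨a, b, c, d, e, f⟩ := hbounds i
    exact chord_mono_aux _ _ _ _ _ a b c d e f h1 h2
  refine ⟨fun x z hx hz i => ?_, key⟩
  obtain ⟨hz0, hzW, hzu⟩ := hz i
  exact ⟨hz0, hzW, hzu.trans (key i x (hx i).1 (hx i).2)⟩
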